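/- If a chord diagram is not reducible and contains a trigon of type D, then there exists a chord p such that the I-move at p produces a chord diagram containing a trigon of type A or of type B. (Step in the proof of the paper's Lemma 2.6, where a single I-move applied to a reduced curve with a type D trigon yields a trigon of type B.) -/

import Mathlib

/-!
Chord diagrams modeling spherical curves (Gauss diagrams).

A chord diagram with `n` chords is a fixed-point-free involution `f` on the
cyclically ordered set `ZMod (2*n)`; the unordered pairs `{a, f a}` are its chords.
-/

namespace SphericalCurveReductivity

/-- `x` lies in the open arc from `a` to `b` (in the positive cyclic direction). -/
def InArc {N : ℕ} (a b x : ZMod N) : Prop :=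
  0 < (x - a).val ∧ (x - a).val < (b - a).val

/-- The chord `{a, f a}` crosses the chord `{c, f c}`: the four endpoints are pairwise
distinct and exactly one of `c`, `f c` lies in the open arc from `a` to `f a`. -/
def Crosses {N : ℕ} (f : ZMod N → ZMod N) (a c : ZMod N) : Prop :=
  c ≠ a ∧ c ≠ f a ∧ f c ≠ a ∧ f c ≠ f a ∧
    Xor' (InArc a (f a) c) (InArc a (f a) (f c))

/-- A chord diagram is reducible if some chord crosses no other chord. -/
def Reducible {N : ℕ} (f : ZMod N → ZMod N) : Prop :=
  ∃ a, ∀ c, ¬ Crosses f a c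

/-- The embedding of the points of the new chord diagram (after the I-move at the
chord `{a, b}`) into the old one: the points `a`, `b` are deleted and the points of
the open arc from `a` to `b` appear in reversed order, followed by the points of the
open arc from `b` to `a` in their original order. -/
def imoveEmb (n : ℕ) (a b : ZMod (2 * n)) (k : ZMod (2 * (n - 1))) : ZMod (2 * n) :=
  if k.val + 1 < (b - a).val then a + (((b - a).val - 1 - k.val : ℕ) : ZMod (2 * n))
  else a + ((k.val + 2 : ℕ) : ZMod (2 * n))

/-- The induced map of points of the old chord diagram (other than `a`, `b`) to points
of the new chord diagram after the I-move at the chord `{a, b}`; inverse to `imoveEmb`. -/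
def imoveProj (n : ℕ) (a b : ZMod (2 * n)) (x : ZMod (2 * n)) : ZMod (2 * (n - 1)) :=
  if (x - a).val < (b - a).val then (((b - a).val - 1 - (x - a).val : ℕ) : ZMod (2 * (n - 1)))
  else (((x - a).val - 2 : ℕ) : ZMod (2 * (n - 1)))

/-- The I-move (inverse-half-twisted splice) at the chord `{a, f a}`: delete the two
points `a`, `f a` and reverse the order of the points along the open arc from `a`
to `f a`, producing a chord diagram with `n - 1` chords. -/
def IMove {n : ℕ} (f : ZMod (2 * n) → ZMod (2 * n)) (a : ZMod (2 * n))
    (k : ZMod (2 * (n - 1))) : ZMod (2 * (n - 1)) :=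
  imoveProj n a (f a) (f (imoveEmb n a (f a) k))

/-- `ReductivityLe m f` : the reductivity of the chord diagram `f` is at most `m`,
i.e. at most `m` successive I-moves transform `f` into a reducible chord diagram. -/
def ReductivityLe : ℕ → ∀ {n : ℕ}, (ZMod (2 * n) → ZMod (2 * n)) → Prop
  | 0, _, f => Reducible f
  | m + 1, n, f => Reducible f ∨ ∃ a : ZMod (2 * n), ReductivityLe m (IMove f a)

/-- An incoherent bigon: the two chords `{i, j}` and `{i+1, j+1}` with the four
endpoints pairwise distinct. -/
def IncoherentBigon {N : ℕ} (f : ZMod N → ZMod N) (i j : ZMod N) : Prop :=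
  f i = j ∧ f (i + 1) = j + 1 ∧ ({i, j, i + 1, j + 1} : Finset (ZMod N)).card = 4

/-- A coherent bigon: the two chords `{i, j+1}` and `{i+1, j}` with the four
endpoints pairwise distinct. -/
def CoherentBigon {N : ℕ} (f : ZMod N → ZMod N) (i j : ZMod N) : Prop :=
  f i = j + 1 ∧ f (i + 1) = j ∧ ({i, j, i + 1, j + 1} : Finset (ZMod N)).card = 4

/-- The six endpoints of a trigon with corners at the consecutive pairs
`(i, i+1)`, `(j, j+1)`, `(k, k+1)`. -/
def trigonSet {N : ℕ} (i j k : ZMod N) : Finset (ZMod N) :=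
  {i, i + 1, j, j + 1, k, k + 1}

/-- A trigon: three chords whose six endpoints form the three pairs of cyclically
consecutive points `(i, i+1)`, `(j, j+1)`, `(k, k+1)` (pairwise distinct), such that no
chord joins the two points of one of these pairs, so that the three chords connect the
three consecutive pairs in a triangle. -/
def Trigon {N : ℕ} (f : ZMod N → ZMod N) (i j k : ZMod N) : Prop :=
  (trigonSet i j k).card = 6 ∧
  (∀ x ∈ trigonSet i j k, f x ∈ trigonSet i j k) ∧
  f i ≠ i + 1 ∧ f j ≠ j + 1 ∧ f k ≠ k + 1

/-- A representative point of the third chord of a trigon (the chord not containing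
`i` nor `i + 1`). -/
def trigonThird {N : ℕ} (f : ZMod N → ZMod N) (i j : ZMod N) : ZMod N :=
  if j = f i ∨ j = f (i + 1) then j + 1 else j

/-- Exactly two of three propositions hold. -/
def ExactlyTwo (p q r : Prop) : Prop :=
  (p ∧ q ∧ ¬r) ∨ (p ∧ ¬q ∧ r) ∨ (¬p ∧ q ∧ r)

/-- Exactly one of three propositions holds. -/
def ExactlyOne (p q r : Prop) : Prop :=
  (p ∧ ¬q ∧ ¬r) ∨ (¬p ∧ q ∧ ¬r) ∨ (¬p ∧ ¬q ∧ r)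

/-- Trigon of type A: exactly two of the three pairs of its chords cross. -/
def TrigonA {N : ℕ} (f : ZMod N → ZMod N) (i j k : ZMod N) : Prop :=
  Trigon f i j k ∧
    ExactlyTwo (Crosses f i (i + 1)) (Crosses f i (trigonThird f i j))
      (Crosses f (i + 1) (trigonThird f i j))

/-- Trigon of type B: exactly one pair of its chords crosses. -/
def TrigonB {N : ℕ} (f : ZMod N → ZMod N) (i j k : ZMod N) : Prop :=
  Trigon f i j k ∧
    ExactlyOne (Crosses f i (i + 1)) (Crosses f i (trigonThird f i j))
      (Crosses f (i + 1) (trigonThird f i j))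

/-- Trigon of type C: its three chords pairwise cross. -/
def TrigonC {N : ℕ} (f : ZMod N → ZMod N) (i j k : ZMod N) : Prop :=
  Trigon f i j k ∧
    Crosses f i (i + 1) ∧ Crosses f i (trigonThird f i j) ∧
      Crosses f (i + 1) (trigonThird f i j)

/-- Trigon of type D: no two of its chords cross. -/
def TrigonD {N : ℕ} (f : ZMod N → ZMod N) (i j k : ZMod N) : Prop :=
  Trigon f i j k ∧
    ¬ Crosses f i (i + 1) ∧ ¬ Crosses f i (trigonThird f i j) ∧
      ¬ Crosses f (i + 1) (trigonThird f i j)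



section Helpers

variable {N : ℕ}

lemma cast_val_self [NeZero N] (a : ZMod N) : ((a.val : ℕ) : ZMod N) = a :=
  ZMod.natCast_zmod_val a

lemma val_sub_le [NeZero N] {u v : ℕ} (hvu : v ≤ u) (hu : u < N) :
    ((u : ZMod N) - (v : ZMod N)).val = u - v := by
  have h : ((u : ZMod N) - v) = ((u - v : ℕ) : ZMod N) := by
    rw [Nat.cast_sub hvu]
  rw [h, ZMod.val_cast_of_lt (by omega)]

lemma val_sub_gt [NeZero N] {u v : ℕ} (hvu : u < v) (hv : v < N) :
    ((u : ZMod N) - (v : ZMod N)).val = u + N - v := by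
  have h : ((u : ZMod N) - v) = ((u + N - v : ℕ) : ZMod N) := by
    rw [Nat.cast_sub (by omega)]
    push_cast [ZMod.natCast_self]
    ring
  rw [h, ZMod.val_cast_of_lt (by omega)]

lemma val_sub_if [NeZero N] {u v : ℕ} (hu : u < N) (hv : v < N) :
    ((u : ZMod N) - (v : ZMod N)).val = if v ≤ u then u - v else u + N - v := by
  rcases le_or_gt v u with h | h
  · rw [if_pos h]; exact val_sub_le h hu
  · rw [if_neg (not_le.mpr h)]; exact val_sub_gt h hv

lemma cast_ne_cast [NeZero N] {u v : ℕ} (hu : u < N) (hv : v < N) (h : u ≠ v) :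
    (u : ZMod N) ≠ (v : ZMod N) := fun he => h (by
  rw [← ZMod.val_cast_of_lt hu, ← ZMod.val_cast_of_lt hv, he])

lemma cast_add_one {u v : ℕ} (h : u + 1 = v) : (u : ZMod N) + 1 = ((v : ℕ) : ZMod N) := by
  subst h; push_cast; ring

lemma zero_eq_cast : (0 : ZMod N) = ((0 : ℕ) : ZMod N) := by norm_num

lemma one_eq_cast : (1 : ZMod N) = ((1 : ℕ) : ZMod N) := by norm_num

lemma inArc_cast [NeZero N] {u v w : ℕ} (hu : u < N) (hv : v < N) (hw : w < N) :
    InArc (u : ZMod N) (v : ZMod N) (w : ZMod N) ↔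
      (0 < (if u ≤ w then w - u else w + N - u) ∧
        (if u ≤ w then w - u else w + N - u) < (if u ≤ v then v - u else v + N - u)) := by
  unfold InArc
  rw [val_sub_if hw hu, val_sub_if hv hu]

end Helpers

section FinsetHelpers

variable {α : Type*} [DecidableEq α]

lemma card_le_two (e f : α) : ({e, f} : Finset α).card ≤ 2 := by
  have h4 := Finset.card_insert_le e ({f} : Finset α)
  have h5 := Finset.card_singleton f
  omega

lemma card_le_three (d e f : α) : ({d, e, f} : Finset α).card ≤ 3 := by
  have h3 := Finset.card_insert_le d ({e, f} : Finset α)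
  have h4 := card_le_two e f
  omega

lemma card_le_four (c d e f : α) : ({c, d, e, f} : Finset α).card ≤ 4 := by
  have h2 := Finset.card_insert_le c ({d, e, f} : Finset α)
  have h3 := card_le_three d e f
  omega

lemma card_le_five (b c d e f : α) : ({b, c, d, e, f} : Finset α).card ≤ 5 := by
  have h1 := Finset.card_insert_le b ({c, d, e, f} : Finset α)
  have h2 := card_le_four c d e f
  omega

lemma six_notmem {a b c d e f : α} (h : ({a, b, c, d, e, f} : Finset α).card = 6) :
    a ∉ ({b, c, d, e, f} : Finset α) ∧ b ∉ ({c, d, e, f} : Finset α) ∧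
      c ∉ ({d, e, f} : Finset α) ∧ d ∉ ({e, f} : Finset α) ∧ e ∉ ({f} : Finset α) := by
  by_cases m1 : a ∈ ({b, c, d, e, f} : Finset α)
  · rw [Finset.insert_eq_self.mpr m1] at h
    have := card_le_five b c d e f; omega
  rw [Finset.card_insert_of_notMem m1] at h
  by_cases m2 : b ∈ ({c, d, e, f} : Finset α)
  · rw [Finset.insert_eq_self.mpr m2] at h
    have := card_le_four c d e f; omega
  rw [Finset.card_insert_of_notMem m2] at h
  by_cases m3 : c ∈ ({d, e, f} : Finset α)
  · rw [Finset.insert_eq_self.mpr m3] at h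
    have := card_le_three d e f; omega
  rw [Finset.card_insert_of_notMem m3] at h
  by_cases m4 : d ∈ ({e, f} : Finset α)
  · rw [Finset.insert_eq_self.mpr m4] at h
    have := card_le_two e f; omega
  rw [Finset.card_insert_of_notMem m4] at h
  by_cases m5 : e ∈ ({f} : Finset α)
  · rw [Finset.insert_eq_self.mpr m5] at h
    have := Finset.card_singleton f; omega
  exact ⟨m1, m2, m3, m4, m5⟩

lemma card_six {a b c d e f : α} (h1 : a ≠ b) (h2 : a ≠ c) (h3 : a ≠ d) (h4 : a ≠ e)
    (h5 : a ≠ f) (h6 : b ≠ c) (h7 : b ≠ d) (h8 : b ≠ e) (h9 : b ≠ f) (h10 : c ≠ d)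
    (h11 : c ≠ e) (h12 : c ≠ f) (h13 : d ≠ e) (h14 : d ≠ f) (h15 : e ≠ f) :
    ({a, b, c, d, e, f} : Finset α).card = 6 := by
  rw [Finset.card_insert_of_notMem (by simp [h1, h2, h3, h4, h5]),
    Finset.card_insert_of_notMem (by simp [h6, h7, h8, h9]),
    Finset.card_insert_of_notMem (by simp [h10, h11, h12]),
    Finset.card_insert_of_notMem (by simp [h13, h14]),
    Finset.card_insert_of_notMem (by simp [h15]),
    Finset.card_singleton]

end FinsetHelpers


section Conj

variable {N : ℕ}

/-- Conjugation of a chord diagram by the rotation `z ↦ z + c`. -/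
def conj (c : ZMod N) (f : ZMod N → ZMod N) : ZMod N → ZMod N :=
  fun z => f (z - c) + c

lemma conj_apply (c : ZMod N) (f : ZMod N → ZMod N) (z : ZMod N) :
    conj c f (z + c) = f z + c := by
  simp [conj]

lemma conj_involutive {c : ZMod N} {f : ZMod N → ZMod N} (hinv : Function.Involutive f) :
    Function.Involutive (conj c f) := by
  intro z
  simp [conj, hinv (z - c)]

lemma conj_free {c : ZMod N} {f : ZMod N → ZMod N} (hfree : ∀ a, f a ≠ a) :
    ∀ a, conj c f a ≠ a := by
  intro a h
  exact hfree (a - c) (eq_sub_of_add_eq h)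

lemma inArc_add (a b x c : ZMod N) : InArc (a + c) (b + c) (x + c) ↔ InArc a b x := by
  unfold InArc
  rw [add_sub_add_right_eq_sub, add_sub_add_right_eq_sub]

lemma crosses_conj (c : ZMod N) (f : ZMod N → ZMod N) (a x : ZMod N) :
    Crosses (conj c f) (a + c) (x + c) ↔ Crosses f a x := by
  unfold Crosses
  simp only [conj_apply, inArc_add, ne_eq, add_left_inj]

lemma not_reducible_conj (c : ZMod N) (f : ZMod N → ZMod N) (h : ¬ Reducible f) :
    ¬ Reducible (conj c f) := by
  intro ⟨a, ha⟩
  apply h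
  refine ⟨a - c, fun x hx => ?_⟩
  have : Crosses (conj c f) ((a - c) + c) (x + c) := (crosses_conj c f (a - c) x).mpr hx
  rw [sub_add_cancel] at this
  exact ha (x + c) this

lemma trigonSet_add (i j k c : ZMod N) :
    trigonSet (i + c) (j + c) (k + c) = (trigonSet i j k).image (· + c) := by
  unfold trigonSet
  simp only [Finset.image_insert, Finset.image_singleton]
  simp [add_right_comm]

lemma trigonThird_conj (c : ZMod N) (f : ZMod N → ZMod N) (i j : ZMod N) :
    trigonThird (conj c f) (i + c) (j + c) = trigonThird f i j + c := by
  unfold trigonThird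
  rw [add_right_comm i c 1, conj_apply, conj_apply]
  by_cases hc : j = f i ∨ j = f (i + 1)
  · rw [if_pos, if_pos hc, add_right_comm]
    rcases hc with h | h
    exacts [Or.inl (by rw [h]), Or.inr (by rw [h])]
  · rw [if_neg, if_neg hc]
    push_neg at hc ⊢
    exact ⟨fun h => absurd (add_right_cancel h) hc.1, fun h => absurd (add_right_cancel h) hc.2⟩

lemma trigonD_conj (c : ZMod N) (f : ZMod N → ZMod N) (i j k : ZMod N)
    (h : TrigonD f i j k) : TrigonD (conj c f) (i + c) (j + c) (k + c) := by
  obtain ⟨⟨hcard, hclos, hni, hnj, hnk⟩, hc1, hc2, hc3⟩ := h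
  refine ⟨⟨?_, ?_, ?_, ?_, ?_⟩, ?_, ?_, ?_⟩
  · rw [trigonSet_add, Finset.card_image_of_injective _ (add_left_injective c), hcard]
  · intro x hx
    rw [trigonSet_add, Finset.mem_image] at hx ⊢
    obtain ⟨z, hz, rfl⟩ := hx
    exact ⟨f z, hclos z hz, by rw [conj_apply]⟩
  · rw [conj_apply, add_right_comm i c 1]
    exact fun h' => hni (add_right_cancel h')
  · rw [conj_apply, add_right_comm j c 1]
    exact fun h' => hnj (add_right_cancel h')
  · rw [conj_apply, add_right_comm k c 1]
    exact fun h' => hnk (add_right_cancel h')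
  · intro hcr
    rw [add_right_comm i c 1] at hcr
    exact hc1 ((crosses_conj c f i (i + 1)).mp hcr)
  · intro hcr
    rw [trigonThird_conj] at hcr
    exact hc2 ((crosses_conj c f i (trigonThird f i j)).mp hcr)
  · intro hcr
    rw [trigonThird_conj, add_right_comm i c 1] at hcr
    exact hc3 ((crosses_conj c f (i + 1) (trigonThird f i j)).mp hcr)

lemma imove_conj {n : ℕ} (c : ZMod (2 * n)) (f : ZMod (2 * n) → ZMod (2 * n))
    (p : ZMod (2 * n)) : IMove (conj c f) (p + c) = IMove f p := by
  funext k
  have hemb : imoveEmb n (p + c) (f p + c) k = imoveEmb n p (f p) k + c := by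
    unfold imoveEmb
    rw [add_sub_add_right_eq_sub]
    split_ifs <;> ring
  show imoveProj n (p + c) (conj c f (p + c)) (conj c f (imoveEmb n (p + c) (conj c f (p + c)) k))
      = imoveProj n p (f p) (f (imoveEmb n p (f p) k))
  rw [conj_apply, hemb, conj_apply]
  unfold imoveProj
  rw [add_sub_add_right_eq_sub, add_sub_add_right_eq_sub]

end Conj

section Eval

lemma emb_eval_lo {n X Y u : ℕ} (hX : X < 2 * n) (hY : Y < 2 * n) (hXY : X < Y)
    (hu : u < 2 * (n - 1)) (hlo : u + 1 < Y - X) :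
    imoveEmb n (X : ZMod (2 * n)) (Y : ZMod (2 * n)) (u : ZMod (2 * (n - 1))) =
      ((X + (Y - X - 1 - u) : ℕ) : ZMod (2 * n)) := by
  haveI : NeZero (2 * n) := ⟨by omega⟩
  haveI : NeZero (2 * (n - 1)) := ⟨by omega⟩
  unfold imoveEmb
  rw [val_sub_le (le_of_lt hXY) hY, ZMod.val_cast_of_lt hu, if_pos hlo, Nat.cast_add]

lemma emb_eval_hi {n X Y u : ℕ} (hX : X < 2 * n) (hY : Y < 2 * n) (hXY : X < Y)
    (hu : u < 2 * (n - 1)) (hhi : ¬ (u + 1 < Y - X)) :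
    imoveEmb n (X : ZMod (2 * n)) (Y : ZMod (2 * n)) (u : ZMod (2 * (n - 1))) =
      ((X + (u + 2) : ℕ) : ZMod (2 * n)) := by
  haveI : NeZero (2 * n) := ⟨by omega⟩
  haveI : NeZero (2 * (n - 1)) := ⟨by omega⟩
  unfold imoveEmb
  rw [val_sub_le (le_of_lt hXY) hY, ZMod.val_cast_of_lt hu, if_neg hhi]
  push_cast
  ring

lemma proj_eval {n X Y : ℕ} (w : ZMod (2 * n)) {s : ℕ} (hX : X < 2 * n) (hY : Y < 2 * n)
    (hXY : X < Y) (hs : (w - (X : ZMod (2 * n))).val = s) (hn : 0 < n) :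
    imoveProj n (X : ZMod (2 * n)) (Y : ZMod (2 * n)) w =
      if s < Y - X then ((Y - X - 1 - s : ℕ) : ZMod (2 * (n - 1)))
      else ((s - 2 : ℕ) : ZMod (2 * (n - 1))) := by
  haveI : NeZero (2 * n) := ⟨by omega⟩
  unfold imoveProj
  rw [hs, val_sub_le (le_of_lt hXY) hY]

/-- The partner of the sixth point of a trigon is forced. -/
lemma sixth_forced {N : ℕ} {f : ZMod N → ZMod N} (hinv : Function.Involutive f)
    {x1 x2 x3 x4 u v : ZMod N}
    (h12 : f x1 = x2) (h34 : f x3 = x4)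
    (hfu : f u = x1 ∨ f u = x2 ∨ f u = x3 ∨ f u = x4 ∨ f u = u ∨ f u = v)
    (hu1 : u ≠ x1) (hu2 : u ≠ x2) (hu3 : u ≠ x3) (hu4 : u ≠ x4) (huu : f u ≠ u) :
    f u = v := by
  have h21 : f x2 = x1 := by rw [← h12, hinv]
  have h43 : f x4 = x3 := by rw [← h34, hinv]
  rcases hfu with h | h | h | h | h | h
  · exact absurd (by rw [← hinv u, h, h12]) hu2
  · exact absurd (by rw [← hinv u, h, h21]) hu1
  · exact absurd (by rw [← hinv u, h, h34]) hu4
  · exact absurd (by rw [← hinv u, h, h43]) hu3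
  · exact absurd h huu
  · exact h

end Eval

section Classify

lemma classify {n : ℕ} (f : ZMod (2 * n) → ZMod (2 * n)) (hinv : Function.Involutive f)
    (hfree : ∀ a, f a ≠ a) {J K : ℕ}
    (hJ2 : 2 ≤ J) (hK2 : 2 ≤ K) (hJN : J + 2 ≤ 2 * n) (hKN : K + 2 ≤ 2 * n)
    (hJK : J + 2 ≤ K ∨ K + 2 ≤ J)
    (hD : TrigonD f 0 ((J : ℕ) : ZMod (2 * n)) ((K : ℕ) : ZMod (2 * n))) :
    ∃ P Q : ℕ, 2 ≤ P ∧ P + 2 ≤ Q ∧ Q + 2 ≤ 2 * n ∧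
      f 1 = ((P : ℕ) : ZMod (2 * n)) ∧ f ((P : ℕ) : ZMod (2 * n)) = 1 ∧
      f ((P + 1 : ℕ) : ZMod (2 * n)) = ((Q : ℕ) : ZMod (2 * n)) ∧
      f ((Q : ℕ) : ZMod (2 * n)) = ((P + 1 : ℕ) : ZMod (2 * n)) ∧
      f ((Q + 1 : ℕ) : ZMod (2 * n)) = 0 ∧ f 0 = ((Q + 1 : ℕ) : ZMod (2 * n)) := by
  haveI : NeZero (2 * n) := ⟨by omega⟩
  have e1 : ((J : ℕ) : ZMod (2 * n)) + 1 = ((J + 1 : ℕ) : ZMod (2 * n)) := cast_add_one rfl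
  have e2 : ((K : ℕ) : ZMod (2 * n)) + 1 = ((K + 1 : ℕ) : ZMod (2 * n)) := cast_add_one rfl
  have nc : ∀ {u v : ℕ}, u < 2 * n → v < 2 * n → u ≠ v →
      ((u : ℕ) : ZMod (2 * n)) ≠ ((v : ℕ) : ZMod (2 * n)) := fun a b c => cast_ne_cast a b c
  have nz : ∀ {u : ℕ}, u < 2 * n → u ≠ 0 → ((u : ℕ) : ZMod (2 * n)) ≠ 0 := by
    intro u hu h0
    rw [zero_eq_cast]
    exact cast_ne_cast hu (by omega) h0
  have no : ∀ {u : ℕ}, u < 2 * n → u ≠ 1 → ((u : ℕ) : ZMod (2 * n)) ≠ 1 := by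
    intro u hu h0
    rw [one_eq_cast]
    exact cast_ne_cast hu (by omega) h0
  have hone : (1 : ZMod (2 * n)) ≠ 0 := by
    rw [zero_eq_cast, one_eq_cast]
    exact cast_ne_cast (by omega) (by omega) (by omega)
  obtain ⟨⟨hcard, hclos, hn0, hnj, hnk⟩, hnc01, hnc0T, hnc1T⟩ := hD
  simp only [zero_add] at hn0 hnc01 hnc0T hnc1T
  rw [e1] at hnj
  rw [e2] at hnk
  have hS : ∀ u : ZMod (2 * n), u ∈ trigonSet 0 ((J : ℕ) : ZMod (2 * n)) ((K : ℕ) : ZMod (2 * n)) →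
      f u = 0 ∨ f u = 1 ∨ f u = ((J : ℕ) : ZMod (2 * n)) ∨ f u = ((J + 1 : ℕ) : ZMod (2 * n)) ∨
        f u = ((K : ℕ) : ZMod (2 * n)) ∨ f u = ((K + 1 : ℕ) : ZMod (2 * n)) := by
    intro u hu
    have h := hclos u hu
    unfold trigonSet at h
    simp only [Finset.mem_insert, Finset.mem_singleton, zero_add, e1, e2] at h
    exact h
  have m0 : (0 : ZMod (2 * n)) ∈ trigonSet 0 ((J : ℕ) : ZMod (2 * n)) ((K : ℕ) : ZMod (2 * n)) := by
    unfold trigonSet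
    simp only [Finset.mem_insert, Finset.mem_singleton]
    exact Or.inl trivial
  have m1 : (1 : ZMod (2 * n)) ∈ trigonSet 0 ((J : ℕ) : ZMod (2 * n)) ((K : ℕ) : ZMod (2 * n)) := by
    unfold trigonSet
    simp only [Finset.mem_insert, Finset.mem_singleton, zero_add]
    exact Or.inr (Or.inl trivial)
  have mJ1 : ((J + 1 : ℕ) : ZMod (2 * n)) ∈ trigonSet 0 ((J : ℕ) : ZMod (2 * n)) ((K : ℕ) : ZMod (2 * n)) := by
    unfold trigonSet
    simp only [Finset.mem_insert, Finset.mem_singleton, e1]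
    exact Or.inr (Or.inr (Or.inr (Or.inl trivial)))
  have mK1 : ((K + 1 : ℕ) : ZMod (2 * n)) ∈ trigonSet 0 ((J : ℕ) : ZMod (2 * n)) ((K : ℕ) : ZMod (2 * n)) := by
    unfold trigonSet
    simp only [Finset.mem_insert, Finset.mem_singleton, e2]
    exact Or.inr (Or.inr (Or.inr (Or.inr (Or.inr trivial))))
  have h0' : f 0 = ((J : ℕ) : ZMod (2 * n)) ∨ f 0 = ((J + 1 : ℕ) : ZMod (2 * n)) ∨
      f 0 = ((K : ℕ) : ZMod (2 * n)) ∨ f 0 = ((K + 1 : ℕ) : ZMod (2 * n)) := by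
    rcases hS 0 m0 with h | h | h | h | h | h
    · exact absurd h (hfree 0)
    · exact absurd h hn0
    exacts [Or.inl h, Or.inr (Or.inl h), Or.inr (Or.inr (Or.inl h)), Or.inr (Or.inr (Or.inr h))]
  have h1' : f 1 = ((J : ℕ) : ZMod (2 * n)) ∨ f 1 = ((J + 1 : ℕ) : ZMod (2 * n)) ∨
      f 1 = ((K : ℕ) : ZMod (2 * n)) ∨ f 1 = ((K + 1 : ℕ) : ZMod (2 * n)) := by
    rcases hS 1 m1 with h | h | h | h | h | h
    · exact absurd ((congrArg f h).symm.trans (hinv 1)) hn0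
    · exact absurd h (hfree 1)
    exacts [Or.inl h, Or.inr (Or.inl h), Or.inr (Or.inr (Or.inl h)), Or.inr (Or.inr (Or.inr h))]
  rcases h0' with hf0 | hf0 | hf0 | hf0 <;> rcases h1' with hf1 | hf1 | hf1 | hf1
  -- (J, J) : impossible, f injective
  · exact absurd (hinv.injective (hf1.trans hf0.symm)) hone
  -- (J, J+1) : same pair, forces f K = K + 1
  · exfalso
    have hfu : f ((K : ℕ) : ZMod (2 * n)) = 0 ∨ f ((K : ℕ) : ZMod (2 * n)) = ((J : ℕ) : ZMod (2 * n)) ∨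
        f ((K : ℕ) : ZMod (2 * n)) = 1 ∨ f ((K : ℕ) : ZMod (2 * n)) = ((J + 1 : ℕ) : ZMod (2 * n)) ∨
        f ((K : ℕ) : ZMod (2 * n)) = ((K : ℕ) : ZMod (2 * n)) ∨ f ((K : ℕ) : ZMod (2 * n)) = ((K + 1 : ℕ) : ZMod (2 * n)) := by
      have := hS ((K : ℕ) : ZMod (2 * n)) (by unfold trigonSet; simp only [Finset.mem_insert, Finset.mem_singleton]; exact Or.inr (Or.inr (Or.inr (Or.inr (Or.inl trivial)))))
      rcases this with h | h | h | h | h | h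
      exacts [Or.inl h, Or.inr (Or.inr (Or.inl h)), Or.inr (Or.inl h), Or.inr (Or.inr (Or.inr (Or.inl h))), Or.inr (Or.inr (Or.inr (Or.inr (Or.inl h)))), Or.inr (Or.inr (Or.inr (Or.inr (Or.inr h))))]
    exact hnk (sixth_forced hinv hf0 hf1 hfu (nz (by omega) (by omega))
      (nc (by omega) (by omega) (by omega)) (no (by omega) (by omega))
      (nc (by omega) (by omega) (by omega)) (hfree _))
  -- (J, K) : B1
  · exfalso
    have hfu : f ((J + 1 : ℕ) : ZMod (2 * n)) = 0 ∨ f ((J + 1 : ℕ) : ZMod (2 * n)) = ((J : ℕ) : ZMod (2 * n)) ∨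
        f ((J + 1 : ℕ) : ZMod (2 * n)) = 1 ∨ f ((J + 1 : ℕ) : ZMod (2 * n)) = ((K : ℕ) : ZMod (2 * n)) ∨
        f ((J + 1 : ℕ) : ZMod (2 * n)) = ((J + 1 : ℕ) : ZMod (2 * n)) ∨
        f ((J + 1 : ℕ) : ZMod (2 * n)) = ((K + 1 : ℕ) : ZMod (2 * n)) := by
      have := hS ((J + 1 : ℕ) : ZMod (2 * n)) mJ1
      rcases this with h | h | h | h | h | h
      exacts [Or.inl h, Or.inr (Or.inr (Or.inl h)), Or.inr (Or.inl h), Or.inr (Or.inr (Or.inr (Or.inr (Or.inl h)))), Or.inr (Or.inr (Or.inr (Or.inl h))), Or.inr (Or.inr (Or.inr (Or.inr (Or.inr h))))]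
    have h3 := sixth_forced hinv hf0 hf1 hfu (nz (by omega) (by omega))
      (nc (by omega) (by omega) (by omega)) (no (by omega) (by omega))
      (nc (by omega) (by omega) (by omega)) (hfree _)
    rcases hJK with hlt | hlt
    · apply hnc01
      unfold Crosses
      rw [hf0, hf1, zero_eq_cast, one_eq_cast]
      refine ⟨cast_ne_cast (by omega) (by omega) (by omega), cast_ne_cast (by omega) (by omega) (by omega),
        cast_ne_cast (by omega) (by omega) (by omega), cast_ne_cast (by omega) (by omega) (by omega), ?_⟩
      rw [inArc_cast (by omega) (by omega) (by omega), inArc_cast (by omega) (by omega) (by omega)]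
      unfold Xor' Xor
      split_ifs <;> omega
    · have hT : trigonThird f 0 ((J : ℕ) : ZMod (2 * n)) = ((J + 1 : ℕ) : ZMod (2 * n)) := by
        unfold trigonThird
        rw [zero_add, hf0, if_pos (Or.inl rfl), e1]
      rw [hT] at hnc0T
      apply hnc0T
      unfold Crosses
      rw [hf0, h3, zero_eq_cast]
      refine ⟨cast_ne_cast (by omega) (by omega) (by omega), cast_ne_cast (by omega) (by omega) (by omega),
        cast_ne_cast (by omega) (by omega) (by omega), cast_ne_cast (by omega) (by omega) (by omega), ?_⟩
      rw [inArc_cast (by omega) (by omega) (by omega), inArc_cast (by omega) (by omega) (by omega)]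
      unfold Xor' Xor
      split_ifs <;> omega
  -- (J, K+1) : B2
  · exfalso
    have hfu : f ((J + 1 : ℕ) : ZMod (2 * n)) = 0 ∨ f ((J + 1 : ℕ) : ZMod (2 * n)) = ((J : ℕ) : ZMod (2 * n)) ∨
        f ((J + 1 : ℕ) : ZMod (2 * n)) = 1 ∨ f ((J + 1 : ℕ) : ZMod (2 * n)) = ((K + 1 : ℕ) : ZMod (2 * n)) ∨
        f ((J + 1 : ℕ) : ZMod (2 * n)) = ((J + 1 : ℕ) : ZMod (2 * n)) ∨
        f ((J + 1 : ℕ) : ZMod (2 * n)) = ((K : ℕ) : ZMod (2 * n)) := by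
      have := hS ((J + 1 : ℕ) : ZMod (2 * n)) mJ1
      rcases this with h | h | h | h | h | h
      exacts [Or.inl h, Or.inr (Or.inr (Or.inl h)), Or.inr (Or.inl h), Or.inr (Or.inr (Or.inr (Or.inr (Or.inl h)))), Or.inr (Or.inr (Or.inr (Or.inr (Or.inr h)))), Or.inr (Or.inr (Or.inr (Or.inl h)))]
    have h3 := sixth_forced hinv hf0 hf1 hfu (nz (by omega) (by omega))
      (nc (by omega) (by omega) (by omega)) (no (by omega) (by omega))
      (nc (by omega) (by omega) (by omega)) (hfree _)
    rcases hJK with hlt | hlt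
    · apply hnc01
      unfold Crosses
      rw [hf0, hf1, zero_eq_cast, one_eq_cast]
      refine ⟨cast_ne_cast (by omega) (by omega) (by omega), cast_ne_cast (by omega) (by omega) (by omega),
        cast_ne_cast (by omega) (by omega) (by omega), cast_ne_cast (by omega) (by omega) (by omega), ?_⟩
      rw [inArc_cast (by omega) (by omega) (by omega), inArc_cast (by omega) (by omega) (by omega)]
      unfold Xor' Xor
      split_ifs <;> omega
    · have hT : trigonThird f 0 ((J : ℕ) : ZMod (2 * n)) = ((J + 1 : ℕ) : ZMod (2 * n)) := by
        unfold trigonThird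
        rw [zero_add, hf0, if_pos (Or.inl rfl), e1]
      rw [hT] at hnc0T
      apply hnc0T
      unfold Crosses
      rw [hf0, h3, zero_eq_cast]
      refine ⟨cast_ne_cast (by omega) (by omega) (by omega), cast_ne_cast (by omega) (by omega) (by omega),
        cast_ne_cast (by omega) (by omega) (by omega), cast_ne_cast (by omega) (by omega) (by omega), ?_⟩
      rw [inArc_cast (by omega) (by omega) (by omega), inArc_cast (by omega) (by omega) (by omega)]
      unfold Xor' Xor
      split_ifs <;> omega
  -- (J+1, J) : same pair
  · exfalso
    have hfu : f ((K : ℕ) : ZMod (2 * n)) = 0 ∨ f ((K : ℕ) : ZMod (2 * n)) = ((J + 1 : ℕ) : ZMod (2 * n)) ∨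
        f ((K : ℕ) : ZMod (2 * n)) = 1 ∨ f ((K : ℕ) : ZMod (2 * n)) = ((J : ℕ) : ZMod (2 * n)) ∨
        f ((K : ℕ) : ZMod (2 * n)) = ((K : ℕ) : ZMod (2 * n)) ∨ f ((K : ℕ) : ZMod (2 * n)) = ((K + 1 : ℕ) : ZMod (2 * n)) := by
      have := hS ((K : ℕ) : ZMod (2 * n)) (by unfold trigonSet; simp only [Finset.mem_insert, Finset.mem_singleton]; exact Or.inr (Or.inr (Or.inr (Or.inr (Or.inl trivial)))))
      rcases this with h | h | h | h | h | h
      exacts [Or.inl h, Or.inr (Or.inr (Or.inl h)), Or.inr (Or.inr (Or.inr (Or.inl h))), Or.inr (Or.inl h), Or.inr (Or.inr (Or.inr (Or.inr (Or.inl h)))), Or.inr (Or.inr (Or.inr (Or.inr (Or.inr h))))]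
    exact hnk (sixth_forced hinv hf0 hf1 hfu (nz (by omega) (by omega))
      (nc (by omega) (by omega) (by omega)) (no (by omega) (by omega))
      (nc (by omega) (by omega) (by omega)) (hfree _))
  -- (J+1, J+1) : impossible
  · exact absurd (hinv.injective (hf1.trans hf0.symm)) hone
  -- (J+1, K) : B3 ; survivor when K + 2 ≤ J
  · have hfu : f ((J : ℕ) : ZMod (2 * n)) = 0 ∨ f ((J : ℕ) : ZMod (2 * n)) = ((J + 1 : ℕ) : ZMod (2 * n)) ∨
        f ((J : ℕ) : ZMod (2 * n)) = 1 ∨ f ((J : ℕ) : ZMod (2 * n)) = ((K : ℕ) : ZMod (2 * n)) ∨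
        f ((J : ℕ) : ZMod (2 * n)) = ((J : ℕ) : ZMod (2 * n)) ∨
        f ((J : ℕ) : ZMod (2 * n)) = ((K + 1 : ℕ) : ZMod (2 * n)) := by
      have := hS ((J : ℕ) : ZMod (2 * n)) (by unfold trigonSet; simp only [Finset.mem_insert, Finset.mem_singleton]; exact Or.inr (Or.inr (Or.inl trivial)))
      rcases this with h | h | h | h | h | h
      exacts [Or.inl h, Or.inr (Or.inr (Or.inl h)), Or.inr (Or.inr (Or.inr (Or.inr (Or.inl h)))), Or.inr (Or.inl h), Or.inr (Or.inr (Or.inr (Or.inl h))), Or.inr (Or.inr (Or.inr (Or.inr (Or.inr h))))]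
    have h3 := sixth_forced hinv hf0 hf1 hfu (nz (by omega) (by omega))
      (nc (by omega) (by omega) (by omega)) (no (by omega) (by omega))
      (nc (by omega) (by omega) (by omega)) (hfree _)
    rcases hJK with hlt | hlt
    · exfalso
      apply hnc01
      unfold Crosses
      rw [hf0, hf1, zero_eq_cast, one_eq_cast]
      refine ⟨cast_ne_cast (by omega) (by omega) (by omega), cast_ne_cast (by omega) (by omega) (by omega),
        cast_ne_cast (by omega) (by omega) (by omega), cast_ne_cast (by omega) (by omega) (by omega), ?_⟩
      rw [inArc_cast (by omega) (by omega) (by omega), inArc_cast (by omega) (by omega) (by omega)]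
      unfold Xor' Xor
      split_ifs <;> omega
    · refine ⟨K, J, by omega, by omega, by omega, hf1, by rw [← hf1, hinv], ?_, h3, by rw [← hf0, hinv], hf0⟩
      rw [← h3, hinv]
  -- (J+1, K+1) : B4
  · exfalso
    have hfu : f ((J : ℕ) : ZMod (2 * n)) = 0 ∨ f ((J : ℕ) : ZMod (2 * n)) = ((J + 1 : ℕ) : ZMod (2 * n)) ∨
        f ((J : ℕ) : ZMod (2 * n)) = 1 ∨ f ((J : ℕ) : ZMod (2 * n)) = ((K + 1 : ℕ) : ZMod (2 * n)) ∨
        f ((J : ℕ) : ZMod (2 * n)) = ((J : ℕ) : ZMod (2 * n)) ∨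
        f ((J : ℕ) : ZMod (2 * n)) = ((K : ℕ) : ZMod (2 * n)) := by
      have := hS ((J : ℕ) : ZMod (2 * n)) (by unfold trigonSet; simp only [Finset.mem_insert, Finset.mem_singleton]; exact Or.inr (Or.inr (Or.inl trivial)))
      rcases this with h | h | h | h | h | h
      exacts [Or.inl h, Or.inr (Or.inr (Or.inl h)), Or.inr (Or.inr (Or.inr (Or.inr (Or.inl h)))), Or.inr (Or.inl h), Or.inr (Or.inr (Or.inr (Or.inr (Or.inr h)))), Or.inr (Or.inr (Or.inr (Or.inl h)))]
    have h3 := sixth_forced hinv hf0 hf1 hfu (nz (by omega) (by omega))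
      (nc (by omega) (by omega) (by omega)) (no (by omega) (by omega))
      (nc (by omega) (by omega) (by omega)) (hfree _)
    have hT : trigonThird f 0 ((J : ℕ) : ZMod (2 * n)) = ((J : ℕ) : ZMod (2 * n)) := by
      unfold trigonThird
      rw [zero_add, hf0, hf1, if_neg]
      rintro (h | h)
      · exact absurd h (nc (by omega) (by omega) (by omega))
      · exact absurd h (nc (by omega) (by omega) (by omega))
    rcases hJK with hlt | hlt
    · apply hnc01
      unfold Crosses
      rw [hf0, hf1, zero_eq_cast, one_eq_cast]
      refine ⟨cast_ne_cast (by omega) (by omega) (by omega), cast_ne_cast (by omega) (by omega) (by omega),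
        cast_ne_cast (by omega) (by omega) (by omega), cast_ne_cast (by omega) (by omega) (by omega), ?_⟩
      rw [inArc_cast (by omega) (by omega) (by omega), inArc_cast (by omega) (by omega) (by omega)]
      unfold Xor' Xor
      split_ifs <;> omega
    · rw [hT] at hnc1T
      apply hnc1T
      unfold Crosses
      rw [hf1, h3, one_eq_cast]
      refine ⟨cast_ne_cast (by omega) (by omega) (by omega), cast_ne_cast (by omega) (by omega) (by omega),
        cast_ne_cast (by omega) (by omega) (by omega), cast_ne_cast (by omega) (by omega) (by omega), ?_⟩
      rw [inArc_cast (by omega) (by omega) (by omega), inArc_cast (by omega) (by omega) (by omega)]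
      unfold Xor' Xor
      split_ifs <;> omega
  -- (K, J) : B5
  · exfalso
    have hfu : f ((J + 1 : ℕ) : ZMod (2 * n)) = 0 ∨ f ((J + 1 : ℕ) : ZMod (2 * n)) = ((K : ℕ) : ZMod (2 * n)) ∨
        f ((J + 1 : ℕ) : ZMod (2 * n)) = 1 ∨ f ((J + 1 : ℕ) : ZMod (2 * n)) = ((J : ℕ) : ZMod (2 * n)) ∨
        f ((J + 1 : ℕ) : ZMod (2 * n)) = ((J + 1 : ℕ) : ZMod (2 * n)) ∨
        f ((J + 1 : ℕ) : ZMod (2 * n)) = ((K + 1 : ℕ) : ZMod (2 * n)) := by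
      have := hS ((J + 1 : ℕ) : ZMod (2 * n)) mJ1
      rcases this with h | h | h | h | h | h
      exacts [Or.inl h, Or.inr (Or.inr (Or.inl h)), Or.inr (Or.inr (Or.inr (Or.inl h))), Or.inr (Or.inr (Or.inr (Or.inr (Or.inl h)))), Or.inr (Or.inl h), Or.inr (Or.inr (Or.inr (Or.inr (Or.inr h))))]
    have h3 := sixth_forced hinv hf0 hf1 hfu (nz (by omega) (by omega))
      (nc (by omega) (by omega) (by omega)) (no (by omega) (by omega))
      (nc (by omega) (by omega) (by omega)) (hfree _)
    have hT : trigonThird f 0 ((J : ℕ) : ZMod (2 * n)) = ((J + 1 : ℕ) : ZMod (2 * n)) := by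
      unfold trigonThird
      rw [zero_add, hf1, if_pos (Or.inr rfl), e1]
    rcases hJK with hlt | hlt
    · rw [hT] at hnc0T
      apply hnc0T
      unfold Crosses
      rw [hf0, h3, zero_eq_cast]
      refine ⟨cast_ne_cast (by omega) (by omega) (by omega), cast_ne_cast (by omega) (by omega) (by omega),
        cast_ne_cast (by omega) (by omega) (by omega), cast_ne_cast (by omega) (by omega) (by omega), ?_⟩
      rw [inArc_cast (by omega) (by omega) (by omega), inArc_cast (by omega) (by omega) (by omega)]
      unfold Xor' Xor
      split_ifs <;> omega
    · apply hnc01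
      unfold Crosses
      rw [hf0, hf1, zero_eq_cast, one_eq_cast]
      refine ⟨cast_ne_cast (by omega) (by omega) (by omega), cast_ne_cast (by omega) (by omega) (by omega),
        cast_ne_cast (by omega) (by omega) (by omega), cast_ne_cast (by omega) (by omega) (by omega), ?_⟩
      rw [inArc_cast (by omega) (by omega) (by omega), inArc_cast (by omega) (by omega) (by omega)]
      unfold Xor' Xor
      split_ifs <;> omega
  -- (K, J+1) : B6
  · exfalso
    have hfu : f ((J : ℕ) : ZMod (2 * n)) = 0 ∨ f ((J : ℕ) : ZMod (2 * n)) = ((K : ℕ) : ZMod (2 * n)) ∨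
        f ((J : ℕ) : ZMod (2 * n)) = 1 ∨ f ((J : ℕ) : ZMod (2 * n)) = ((J + 1 : ℕ) : ZMod (2 * n)) ∨
        f ((J : ℕ) : ZMod (2 * n)) = ((J : ℕ) : ZMod (2 * n)) ∨
        f ((J : ℕ) : ZMod (2 * n)) = ((K + 1 : ℕ) : ZMod (2 * n)) := by
      have := hS ((J : ℕ) : ZMod (2 * n)) (by unfold trigonSet; simp only [Finset.mem_insert, Finset.mem_singleton]; exact Or.inr (Or.inr (Or.inl trivial)))
      rcases this with h | h | h | h | h | h
      exacts [Or.inl h, Or.inr (Or.inr (Or.inl h)), Or.inr (Or.inr (Or.inr (Or.inr (Or.inl h)))), Or.inr (Or.inr (Or.inr (Or.inl h))), Or.inr (Or.inl h), Or.inr (Or.inr (Or.inr (Or.inr (Or.inr h))))]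
    have h3 := sixth_forced hinv hf0 hf1 hfu (nz (by omega) (by omega))
      (nc (by omega) (by omega) (by omega)) (no (by omega) (by omega))
      (nc (by omega) (by omega) (by omega)) (hfree _)
    have hT : trigonThird f 0 ((J : ℕ) : ZMod (2 * n)) = ((J : ℕ) : ZMod (2 * n)) := by
      unfold trigonThird
      rw [zero_add, hf0, hf1, if_neg]
      rintro (h | h)
      · exact absurd h (nc (by omega) (by omega) (by omega))
      · exact absurd h (nc (by omega) (by omega) (by omega))
    rcases hJK with hlt | hlt
    · rw [hT] at hnc0T
      apply hnc0T
      unfold Crosses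
      rw [hf0, h3, zero_eq_cast]
      refine ⟨cast_ne_cast (by omega) (by omega) (by omega), cast_ne_cast (by omega) (by omega) (by omega),
        cast_ne_cast (by omega) (by omega) (by omega), cast_ne_cast (by omega) (by omega) (by omega), ?_⟩
      rw [inArc_cast (by omega) (by omega) (by omega), inArc_cast (by omega) (by omega) (by omega)]
      unfold Xor' Xor
      split_ifs <;> omega
    · apply hnc01
      unfold Crosses
      rw [hf0, hf1, zero_eq_cast, one_eq_cast]
      refine ⟨cast_ne_cast (by omega) (by omega) (by omega), cast_ne_cast (by omega) (by omega) (by omega),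
        cast_ne_cast (by omega) (by omega) (by omega), cast_ne_cast (by omega) (by omega) (by omega), ?_⟩
      rw [inArc_cast (by omega) (by omega) (by omega), inArc_cast (by omega) (by omega) (by omega)]
      unfold Xor' Xor
      split_ifs <;> omega
  -- (K, K) : impossible
  · exact absurd (hinv.injective (hf1.trans hf0.symm)) hone
  -- (K, K+1) : same pair
  · exfalso
    have hfu : f ((J : ℕ) : ZMod (2 * n)) = 0 ∨ f ((J : ℕ) : ZMod (2 * n)) = ((K : ℕ) : ZMod (2 * n)) ∨
        f ((J : ℕ) : ZMod (2 * n)) = 1 ∨ f ((J : ℕ) : ZMod (2 * n)) = ((K + 1 : ℕ) : ZMod (2 * n)) ∨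
        f ((J : ℕ) : ZMod (2 * n)) = ((J : ℕ) : ZMod (2 * n)) ∨
        f ((J : ℕ) : ZMod (2 * n)) = ((J + 1 : ℕ) : ZMod (2 * n)) := by
      have := hS ((J : ℕ) : ZMod (2 * n)) (by unfold trigonSet; simp only [Finset.mem_insert, Finset.mem_singleton]; exact Or.inr (Or.inr (Or.inl trivial)))
      rcases this with h | h | h | h | h | h
      exacts [Or.inl h, Or.inr (Or.inr (Or.inl h)), Or.inr (Or.inr (Or.inr (Or.inr (Or.inl h)))), Or.inr (Or.inr (Or.inr (Or.inr (Or.inr h)))), Or.inr (Or.inl h), Or.inr (Or.inr (Or.inr (Or.inl h)))]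
    exact hnj (sixth_forced hinv hf0 hf1 hfu (nz (by omega) (by omega))
      (nc (by omega) (by omega) (by omega)) (no (by omega) (by omega))
      (nc (by omega) (by omega) (by omega)) (hfree _))
  -- (K+1, J) : B7 ; survivor when J + 2 ≤ K
  · have hfu : f ((J + 1 : ℕ) : ZMod (2 * n)) = 0 ∨ f ((J + 1 : ℕ) : ZMod (2 * n)) = ((K + 1 : ℕ) : ZMod (2 * n)) ∨
        f ((J + 1 : ℕ) : ZMod (2 * n)) = 1 ∨ f ((J + 1 : ℕ) : ZMod (2 * n)) = ((J : ℕ) : ZMod (2 * n)) ∨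
        f ((J + 1 : ℕ) : ZMod (2 * n)) = ((J + 1 : ℕ) : ZMod (2 * n)) ∨
        f ((J + 1 : ℕ) : ZMod (2 * n)) = ((K : ℕ) : ZMod (2 * n)) := by
      have := hS ((J + 1 : ℕ) : ZMod (2 * n)) mJ1
      rcases this with h | h | h | h | h | h
      exacts [Or.inl h, Or.inr (Or.inr (Or.inl h)), Or.inr (Or.inr (Or.inr (Or.inl h))), Or.inr (Or.inr (Or.inr (Or.inr (Or.inl h)))), Or.inr (Or.inr (Or.inr (Or.inr (Or.inr h)))), Or.inr (Or.inl h)]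
    have h3 := sixth_forced hinv hf0 hf1 hfu (nz (by omega) (by omega))
      (nc (by omega) (by omega) (by omega)) (no (by omega) (by omega))
      (nc (by omega) (by omega) (by omega)) (hfree _)
    rcases hJK with hlt | hlt
    · refine ⟨J, K, by omega, by omega, by omega, hf1, by rw [← hf1, hinv], h3, ?_, by rw [← hf0, hinv], hf0⟩
      rw [← h3, hinv]
    · exfalso
      apply hnc01
      unfold Crosses
      rw [hf0, hf1, zero_eq_cast, one_eq_cast]
      refine ⟨cast_ne_cast (by omega) (by omega) (by omega), cast_ne_cast (by omega) (by omega) (by omega),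
        cast_ne_cast (by omega) (by omega) (by omega), cast_ne_cast (by omega) (by omega) (by omega), ?_⟩
      rw [inArc_cast (by omega) (by omega) (by omega), inArc_cast (by omega) (by omega) (by omega)]
      unfold Xor' Xor
      split_ifs <;> omega
  -- (K+1, J+1) : B8
  · exfalso
    have hfu : f ((J : ℕ) : ZMod (2 * n)) = 0 ∨ f ((J : ℕ) : ZMod (2 * n)) = ((K + 1 : ℕ) : ZMod (2 * n)) ∨
        f ((J : ℕ) : ZMod (2 * n)) = 1 ∨ f ((J : ℕ) : ZMod (2 * n)) = ((J + 1 : ℕ) : ZMod (2 * n)) ∨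
        f ((J : ℕ) : ZMod (2 * n)) = ((J : ℕ) : ZMod (2 * n)) ∨
        f ((J : ℕ) : ZMod (2 * n)) = ((K : ℕ) : ZMod (2 * n)) := by
      have := hS ((J : ℕ) : ZMod (2 * n)) (by unfold trigonSet; simp only [Finset.mem_insert, Finset.mem_singleton]; exact Or.inr (Or.inr (Or.inl trivial)))
      rcases this with h | h | h | h | h | h
      exacts [Or.inl h, Or.inr (Or.inr (Or.inl h)), Or.inr (Or.inr (Or.inr (Or.inr (Or.inl h)))), Or.inr (Or.inr (Or.inr (Or.inl h))), Or.inr (Or.inr (Or.inr (Or.inr (Or.inr h)))), Or.inr (Or.inl h)]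
    have h3 := sixth_forced hinv hf0 hf1 hfu (nz (by omega) (by omega))
      (nc (by omega) (by omega) (by omega)) (no (by omega) (by omega))
      (nc (by omega) (by omega) (by omega)) (hfree _)
    have hT : trigonThird f 0 ((J : ℕ) : ZMod (2 * n)) = ((J : ℕ) : ZMod (2 * n)) := by
      unfold trigonThird
      rw [zero_add, hf0, hf1, if_neg]
      rintro (h | h)
      · exact absurd h (nc (by omega) (by omega) (by omega))
      · exact absurd h (nc (by omega) (by omega) (by omega))
    rcases hJK with hlt | hlt
    · rw [hT] at hnc1T
      apply hnc1T
      unfold Crosses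
      rw [hf1, h3, one_eq_cast]
      refine ⟨cast_ne_cast (by omega) (by omega) (by omega), cast_ne_cast (by omega) (by omega) (by omega),
        cast_ne_cast (by omega) (by omega) (by omega), cast_ne_cast (by omega) (by omega) (by omega), ?_⟩
      rw [inArc_cast (by omega) (by omega) (by omega), inArc_cast (by omega) (by omega) (by omega)]
      unfold Xor' Xor
      split_ifs <;> omega
    · apply hnc01
      unfold Crosses
      rw [hf0, hf1, zero_eq_cast, one_eq_cast]
      refine ⟨cast_ne_cast (by omega) (by omega) (by omega), cast_ne_cast (by omega) (by omega) (by omega),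
        cast_ne_cast (by omega) (by omega) (by omega), cast_ne_cast (by omega) (by omega) (by omega), ?_⟩
      rw [inArc_cast (by omega) (by omega) (by omega), inArc_cast (by omega) (by omega) (by omega)]
      unfold Xor' Xor
      split_ifs <;> omega
  -- (K+1, K) : same pair
  · exfalso
    have hfu : f ((J : ℕ) : ZMod (2 * n)) = 0 ∨ f ((J : ℕ) : ZMod (2 * n)) = ((K + 1 : ℕ) : ZMod (2 * n)) ∨
        f ((J : ℕ) : ZMod (2 * n)) = 1 ∨ f ((J : ℕ) : ZMod (2 * n)) = ((K : ℕ) : ZMod (2 * n)) ∨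
        f ((J : ℕ) : ZMod (2 * n)) = ((J : ℕ) : ZMod (2 * n)) ∨
        f ((J : ℕ) : ZMod (2 * n)) = ((J + 1 : ℕ) : ZMod (2 * n)) := by
      have := hS ((J : ℕ) : ZMod (2 * n)) (by unfold trigonSet; simp only [Finset.mem_insert, Finset.mem_singleton]; exact Or.inr (Or.inr (Or.inl trivial)))
      rcases this with h | h | h | h | h | h
      exacts [Or.inl h, Or.inr (Or.inr (Or.inl h)), Or.inr (Or.inr (Or.inr (Or.inr (Or.inl h)))), Or.inr (Or.inr (Or.inr (Or.inr (Or.inr h)))), Or.inr (Or.inr (Or.inr (Or.inl h))), Or.inr (Or.inl h)]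
    exact hnj (sixth_forced hinv hf0 hf1 hfu (nz (by omega) (by omega))
      (nc (by omega) (by omega) (by omega)) (no (by omega) (by omega))
      (nc (by omega) (by omega) (by omega)) (hfree _))
  -- (K+1, K+1) : impossible
  · exact absurd (hinv.injective (hf1.trans hf0.symm)) hone

end Classify

section Construction

set_option maxHeartbeats 3200000 in
lemma construction {n : ℕ} (f : ZMod (2 * n) → ZMod (2 * n)) {P Q X Y : ℕ}
    (hX2 : 2 ≤ X) (hXP : X < P) (hPQ : P + 2 ≤ Q) (hQN : Q + 2 ≤ 2 * n)
    (hYP : P + 2 ≤ Y) (hYN : Y < 2 * n) (hYQ : Y ≠ Q) (hYQ1 : Y ≠ Q + 1)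
    (hf1 : f 1 = ((P : ℕ) : ZMod (2 * n)))
    (hfP : f ((P : ℕ) : ZMod (2 * n)) = 1)
    (hfP1 : f ((P + 1 : ℕ) : ZMod (2 * n)) = ((Q : ℕ) : ZMod (2 * n)))
    (hfQ : f ((Q : ℕ) : ZMod (2 * n)) = ((P + 1 : ℕ) : ZMod (2 * n)))
    (hfQ1 : f ((Q + 1 : ℕ) : ZMod (2 * n)) = 0)
    (hf0 : f 0 = ((Q + 1 : ℕ) : ZMod (2 * n)))
    (hfX : f ((X : ℕ) : ZMod (2 * n)) = ((Y : ℕ) : ZMod (2 * n))) :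
    ∃ i' j' k' : ZMod (2 * (n - 1)),
      TrigonA (IMove f ((X : ℕ) : ZMod (2 * n))) i' j' k' ∨
        TrigonB (IMove f ((X : ℕ) : ZMod (2 * n))) i' j' k' := by
  haveI : NeZero (2 * n) := ⟨by omega⟩
  haveI : NeZero (2 * (n - 1)) := ⟨by omega⟩
  have hXY : X < Y := by omega
  have hs0 : ((0 : ZMod (2 * n)) - ((X : ℕ) : ZMod (2 * n))).val = 0 + 2 * n - X := by
    rw [zero_eq_cast]; exact val_sub_gt (by omega) (by omega)
  have hs1 : ((1 : ZMod (2 * n)) - ((X : ℕ) : ZMod (2 * n))).val = 1 + 2 * n - X := by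
    rw [one_eq_cast]; exact val_sub_gt (by omega) (by omega)
  have hsP : (((P : ℕ) : ZMod (2 * n)) - ((X : ℕ) : ZMod (2 * n))).val = P - X := val_sub_le (by omega) (by omega)
  have hsP1 : (((P + 1 : ℕ) : ZMod (2 * n)) - ((X : ℕ) : ZMod (2 * n))).val = P + 1 - X := val_sub_le (by omega) (by omega)
  have hsQ : (((Q : ℕ) : ZMod (2 * n)) - ((X : ℕ) : ZMod (2 * n))).val = Q - X := val_sub_le (by omega) (by omega)
  have hsQ1 : (((Q + 1 : ℕ) : ZMod (2 * n)) - ((X : ℕ) : ZMod (2 * n))).val = Q + 1 - X := val_sub_le (by omega) (by omega)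
  have ncM : ∀ {u v : ℕ}, u < 2 * (n - 1) → v < 2 * (n - 1) → u ≠ v →
      ((u : ℕ) : ZMod (2 * (n - 1))) ≠ ((v : ℕ) : ZMod (2 * (n - 1))) :=
    fun a b c => cast_ne_cast a b c
  rcases Nat.lt_or_ge Y Q with hcase | hcase
  · -- Case C : Y < Q
    have eA1 : IMove f ((X : ℕ) : ZMod (2 * n)) ((Y - P - 2 : ℕ) : ZMod (2 * (n - 1))) = ((Q - X - 2 : ℕ) : ZMod (2 * (n - 1))) := by
      unfold IMove
      rw [hfX]
      rw [emb_eval_lo (by omega) (by omega) hXY (by omega) (by omega)]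
      rw [congrArg (fun t : ℕ => ((t : ℕ) : ZMod (2 * n)))
        (by omega : X + (Y - X - 1 - (Y - P - 2)) = P + 1)]
      rw [hfP1]
      rw [proj_eval _ (by omega) (by omega) hXY hsQ (by omega)]
      rw [if_neg (by omega)]
      all_goals exact congrArg (fun t : ℕ => ((t : ℕ) : ZMod (2 * (n - 1)))) (by omega)
    have eA2 : IMove f ((X : ℕ) : ZMod (2 * n)) ((Y - P - 1 : ℕ) : ZMod (2 * (n - 1))) = ((2 * n - X - 1 : ℕ) : ZMod (2 * (n - 1))) := by
      unfold IMove
      rw [hfX]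
      rw [emb_eval_lo (by omega) (by omega) hXY (by omega) (by omega)]
      rw [congrArg (fun t : ℕ => ((t : ℕ) : ZMod (2 * n)))
        (by omega : X + (Y - X - 1 - (Y - P - 1)) = P)]
      rw [hfP]
      rw [proj_eval _ (by omega) (by omega) hXY hs1 (by omega)]
      rw [if_neg (by omega)]
      all_goals exact congrArg (fun t : ℕ => ((t : ℕ) : ZMod (2 * (n - 1)))) (by omega)
    have eB1 : IMove f ((X : ℕ) : ZMod (2 * n)) ((Q - X - 2 : ℕ) : ZMod (2 * (n - 1))) = ((Y - P - 2 : ℕ) : ZMod (2 * (n - 1))) := by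
      unfold IMove
      rw [hfX]
      rw [emb_eval_hi (by omega) (by omega) hXY (by omega) (by omega)]
      rw [congrArg (fun t : ℕ => ((t : ℕ) : ZMod (2 * n)))
        (by omega : X + ((Q - X - 2) + 2) = Q)]
      rw [hfQ]
      rw [proj_eval _ (by omega) (by omega) hXY hsP1 (by omega)]
      rw [if_pos (by omega)]
      all_goals exact congrArg (fun t : ℕ => ((t : ℕ) : ZMod (2 * (n - 1)))) (by omega)
    have eB2 : IMove f ((X : ℕ) : ZMod (2 * n)) ((Q - X - 1 : ℕ) : ZMod (2 * (n - 1))) = ((2 * n - X - 2 : ℕ) : ZMod (2 * (n - 1))) := by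
      unfold IMove
      rw [hfX]
      rw [emb_eval_hi (by omega) (by omega) hXY (by omega) (by omega)]
      rw [congrArg (fun t : ℕ => ((t : ℕ) : ZMod (2 * n)))
        (by omega : X + ((Q - X - 1) + 2) = Q + 1)]
      rw [hfQ1]
      rw [proj_eval _ (by omega) (by omega) hXY hs0 (by omega)]
      rw [if_neg (by omega)]
      all_goals exact congrArg (fun t : ℕ => ((t : ℕ) : ZMod (2 * (n - 1)))) (by omega)
    have eC1 : IMove f ((X : ℕ) : ZMod (2 * n)) ((2 * n - X - 2 : ℕ) : ZMod (2 * (n - 1))) = ((Q - X - 1 : ℕ) : ZMod (2 * (n - 1))) := by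
      unfold IMove
      rw [hfX]
      rw [emb_eval_hi (by omega) (by omega) hXY (by omega) (by omega)]
      rw [show ((X + ((2 * n - X - 2) + 2) : ℕ) : ZMod (2 * n)) = (0 : ZMod (2 * n)) by
        rw [show X + ((2 * n - X - 2) + 2) = 2 * n from by omega]; exact ZMod.natCast_self _]
      rw [hf0]
      rw [proj_eval _ (by omega) (by omega) hXY hsQ1 (by omega)]
      rw [if_neg (by omega)]
      all_goals exact congrArg (fun t : ℕ => ((t : ℕ) : ZMod (2 * (n - 1)))) (by omega)
    have eC2 : IMove f ((X : ℕ) : ZMod (2 * n)) ((2 * n - X - 1 : ℕ) : ZMod (2 * (n - 1))) = ((Y - P - 1 : ℕ) : ZMod (2 * (n - 1))) := by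
      unfold IMove
      rw [hfX]
      rw [emb_eval_hi (by omega) (by omega) hXY (by omega) (by omega)]
      rw [show ((X + ((2 * n - X - 1) + 2) : ℕ) : ZMod (2 * n)) = (1 : ZMod (2 * n)) by
        rw [show X + ((2 * n - X - 1) + 2) = 2 * n + 1 from by omega, Nat.cast_add, ZMod.natCast_self,
          Nat.cast_one, zero_add]]
      rw [hf1]
      rw [proj_eval _ (by omega) (by omega) hXY hsP (by omega)]
      rw [if_pos (by omega)]
      all_goals exact congrArg (fun t : ℕ => ((t : ℕ) : ZMod (2 * (n - 1)))) (by omega)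

    have p1 : ((Y - P - 2 : ℕ) : ZMod (2 * (n - 1))) + 1 = ((Y - P - 1 : ℕ) : ZMod (2 * (n - 1))) := cast_add_one (by omega)
    have p2 : ((Q - X - 2 : ℕ) : ZMod (2 * (n - 1))) + 1 = ((Q - X - 1 : ℕ) : ZMod (2 * (n - 1))) := cast_add_one (by omega)
    have p3 : ((2 * n - X - 2 : ℕ) : ZMod (2 * (n - 1))) + 1 = ((2 * n - X - 1 : ℕ) : ZMod (2 * (n - 1))) := cast_add_one (by omega)
    refine ⟨((Y - P - 2 : ℕ) : ZMod (2 * (n - 1))), ((Q - X - 2 : ℕ) : ZMod (2 * (n - 1))), ((2 * n - X - 2 : ℕ) : ZMod (2 * (n - 1))), Or.inr ?_⟩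
    have hT : trigonThird (IMove f ((X : ℕ) : ZMod (2 * n))) ((Y - P - 2 : ℕ) : ZMod (2 * (n - 1))) ((Q - X - 2 : ℕ) : ZMod (2 * (n - 1))) = ((Q - X - 1 : ℕ) : ZMod (2 * (n - 1))) := by
      unfold trigonThird
      rw [eA1, if_pos (Or.inl rfl), p2]
    unfold TrigonB Trigon
    rw [hT]
    refine ⟨⟨?_, ?_, ?_, ?_, ?_⟩, ?_⟩
    · unfold trigonSet
      rw [p1, p2, p3]
      exact card_six (ncM (by omega) (by omega) (by omega)) (ncM (by omega) (by omega) (by omega)) (ncM (by omega) (by omega) (by omega)) (ncM (by omega) (by omega) (by omega)) (ncM (by omega) (by omega) (by omega))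
        (ncM (by omega) (by omega) (by omega)) (ncM (by omega) (by omega) (by omega)) (ncM (by omega) (by omega) (by omega)) (ncM (by omega) (by omega) (by omega)) (ncM (by omega) (by omega) (by omega))
        (ncM (by omega) (by omega) (by omega)) (ncM (by omega) (by omega) (by omega)) (ncM (by omega) (by omega) (by omega)) (ncM (by omega) (by omega) (by omega)) (ncM (by omega) (by omega) (by omega))
    · intro x hx
      unfold trigonSet at hx ⊢
      rw [p1, p2, p3] at hx ⊢
      simp only [Finset.mem_insert, Finset.mem_singleton] at hx
      rcases hx with rfl | rfl | rfl | rfl | rfl | rfl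
      · rw [eA1]; simp only [Finset.mem_insert, Finset.mem_singleton]; exact Or.inr (Or.inr (Or.inl trivial))
      · rw [eA2]; simp only [Finset.mem_insert, Finset.mem_singleton]; exact Or.inr (Or.inr (Or.inr (Or.inr (Or.inr trivial))))
      · rw [eB1]; simp only [Finset.mem_insert, Finset.mem_singleton]; exact Or.inl trivial
      · rw [eB2]; simp only [Finset.mem_insert, Finset.mem_singleton]; exact Or.inr (Or.inr (Or.inr (Or.inr (Or.inl trivial))))
      · rw [eC1]; simp only [Finset.mem_insert, Finset.mem_singleton]; exact Or.inr (Or.inr (Or.inr (Or.inl trivial)))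
      · rw [eC2]; simp only [Finset.mem_insert, Finset.mem_singleton]; exact Or.inr (Or.inl trivial)
    · rw [p1, eA1]; exact (ncM (by omega) (by omega) (by omega))
    · rw [p2, eB1]; exact (ncM (by omega) (by omega) (by omega))
    · rw [p3, eC1]; exact (ncM (by omega) (by omega) (by omega))
    · rw [p1]
      unfold ExactlyOne
      refine Or.inl ⟨?_, ?_, ?_⟩
      · unfold Crosses
        rw [eA1, eA2]
        refine ⟨(ncM (by omega) (by omega) (by omega)), (ncM (by omega) (by omega) (by omega)), (ncM (by omega) (by omega) (by omega)), (ncM (by omega) (by omega) (by omega)), ?_⟩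
        rw [inArc_cast (by omega) (by omega) (by omega), inArc_cast (by omega) (by omega) (by omega)]
        unfold Xor' Xor
        split_ifs <;> omega
      · intro hc
        unfold Crosses at hc
        rw [eA1, eB2] at hc
        obtain ⟨-, -, -, -, hx⟩ := hc
        rw [inArc_cast (by omega) (by omega) (by omega), inArc_cast (by omega) (by omega) (by omega)] at hx
        unfold Xor' Xor at hx
        split_ifs at hx <;> omega
      · intro hc
        unfold Crosses at hc
        rw [eA2, eB2] at hc
        obtain ⟨-, -, -, -, hx⟩ := hc
        rw [inArc_cast (by omega) (by omega) (by omega), inArc_cast (by omega) (by omega) (by omega)] at hx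
        unfold Xor' Xor at hx
        split_ifs at hx <;> omega
  · -- Case A : Q + 2 ≤ Y
    have eB1 : IMove f ((X : ℕ) : ZMod (2 * n)) ((Y - P - 2 : ℕ) : ZMod (2 * (n - 1))) = ((Y - Q - 1 : ℕ) : ZMod (2 * (n - 1))) := by
      unfold IMove
      rw [hfX]
      rw [emb_eval_lo (by omega) (by omega) hXY (by omega) (by omega)]
      rw [congrArg (fun t : ℕ => ((t : ℕ) : ZMod (2 * n)))
        (by omega : X + (Y - X - 1 - (Y - P - 2)) = P + 1)]
      rw [hfP1]
      rw [proj_eval _ (by omega) (by omega) hXY hsQ (by omega)]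
      rw [if_pos (by omega)]
      all_goals exact congrArg (fun t : ℕ => ((t : ℕ) : ZMod (2 * (n - 1)))) (by omega)
    have eB2 : IMove f ((X : ℕ) : ZMod (2 * n)) ((Y - P - 1 : ℕ) : ZMod (2 * (n - 1))) = ((2 * n - X - 1 : ℕ) : ZMod (2 * (n - 1))) := by
      unfold IMove
      rw [hfX]
      rw [emb_eval_lo (by omega) (by omega) hXY (by omega) (by omega)]
      rw [congrArg (fun t : ℕ => ((t : ℕ) : ZMod (2 * n)))
        (by omega : X + (Y - X - 1 - (Y - P - 1)) = P)]
      rw [hfP]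
      rw [proj_eval _ (by omega) (by omega) hXY hs1 (by omega)]
      rw [if_neg (by omega)]
      all_goals exact congrArg (fun t : ℕ => ((t : ℕ) : ZMod (2 * (n - 1)))) (by omega)
    have eA1 : IMove f ((X : ℕ) : ZMod (2 * n)) ((Y - Q - 2 : ℕ) : ZMod (2 * (n - 1))) = ((2 * n - X - 2 : ℕ) : ZMod (2 * (n - 1))) := by
      unfold IMove
      rw [hfX]
      rw [emb_eval_lo (by omega) (by omega) hXY (by omega) (by omega)]
      rw [congrArg (fun t : ℕ => ((t : ℕ) : ZMod (2 * n)))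
        (by omega : X + (Y - X - 1 - (Y - Q - 2)) = Q + 1)]
      rw [hfQ1]
      rw [proj_eval _ (by omega) (by omega) hXY hs0 (by omega)]
      rw [if_neg (by omega)]
      all_goals exact congrArg (fun t : ℕ => ((t : ℕ) : ZMod (2 * (n - 1)))) (by omega)
    have eA2 : IMove f ((X : ℕ) : ZMod (2 * n)) ((Y - Q - 1 : ℕ) : ZMod (2 * (n - 1))) = ((Y - P - 2 : ℕ) : ZMod (2 * (n - 1))) := by
      unfold IMove
      rw [hfX]
      rw [emb_eval_lo (by omega) (by omega) hXY (by omega) (by omega)]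
      rw [congrArg (fun t : ℕ => ((t : ℕ) : ZMod (2 * n)))
        (by omega : X + (Y - X - 1 - (Y - Q - 1)) = Q)]
      rw [hfQ]
      rw [proj_eval _ (by omega) (by omega) hXY hsP1 (by omega)]
      rw [if_pos (by omega)]
      all_goals exact congrArg (fun t : ℕ => ((t : ℕ) : ZMod (2 * (n - 1)))) (by omega)
    have eC1 : IMove f ((X : ℕ) : ZMod (2 * n)) ((2 * n - X - 2 : ℕ) : ZMod (2 * (n - 1))) = ((Y - Q - 2 : ℕ) : ZMod (2 * (n - 1))) := by
      unfold IMove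
      rw [hfX]
      rw [emb_eval_hi (by omega) (by omega) hXY (by omega) (by omega)]
      rw [show ((X + ((2 * n - X - 2) + 2) : ℕ) : ZMod (2 * n)) = (0 : ZMod (2 * n)) by
        rw [show X + ((2 * n - X - 2) + 2) = 2 * n from by omega]; exact ZMod.natCast_self _]
      rw [hf0]
      rw [proj_eval _ (by omega) (by omega) hXY hsQ1 (by omega)]
      rw [if_pos (by omega)]
      all_goals exact congrArg (fun t : ℕ => ((t : ℕ) : ZMod (2 * (n - 1)))) (by omega)
    have eC2 : IMove f ((X : ℕ) : ZMod (2 * n)) ((2 * n - X - 1 : ℕ) : ZMod (2 * (n - 1))) = ((Y - P - 1 : ℕ) : ZMod (2 * (n - 1))) := by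
      unfold IMove
      rw [hfX]
      rw [emb_eval_hi (by omega) (by omega) hXY (by omega) (by omega)]
      rw [show ((X + ((2 * n - X - 1) + 2) : ℕ) : ZMod (2 * n)) = (1 : ZMod (2 * n)) by
        rw [show X + ((2 * n - X - 1) + 2) = 2 * n + 1 from by omega, Nat.cast_add, ZMod.natCast_self,
          Nat.cast_one, zero_add]]
      rw [hf1]
      rw [proj_eval _ (by omega) (by omega) hXY hsP (by omega)]
      rw [if_pos (by omega)]
      all_goals exact congrArg (fun t : ℕ => ((t : ℕ) : ZMod (2 * (n - 1)))) (by omega)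

    have pa : ((Y - Q - 2 : ℕ) : ZMod (2 * (n - 1))) + 1 = ((Y - Q - 1 : ℕ) : ZMod (2 * (n - 1))) := cast_add_one (by omega)
    have pb : ((Y - P - 2 : ℕ) : ZMod (2 * (n - 1))) + 1 = ((Y - P - 1 : ℕ) : ZMod (2 * (n - 1))) := cast_add_one (by omega)
    have pc : ((2 * n - X - 2 : ℕ) : ZMod (2 * (n - 1))) + 1 = ((2 * n - X - 1 : ℕ) : ZMod (2 * (n - 1))) := cast_add_one (by omega)
    refine ⟨((Y - P - 2 : ℕ) : ZMod (2 * (n - 1))), ((Y - Q - 2 : ℕ) : ZMod (2 * (n - 1))), ((2 * n - X - 2 : ℕ) : ZMod (2 * (n - 1))), Or.inr ?_⟩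
    have hT : trigonThird (IMove f ((X : ℕ) : ZMod (2 * n))) ((Y - P - 2 : ℕ) : ZMod (2 * (n - 1))) ((Y - Q - 2 : ℕ) : ZMod (2 * (n - 1))) = ((Y - Q - 2 : ℕ) : ZMod (2 * (n - 1))) := by
      unfold trigonThird
      rw [pb, eB1, eB2, if_neg]
      rintro (h | h)
      · exact absurd h (ncM (by omega) (by omega) (by omega))
      · exact absurd h (ncM (by omega) (by omega) (by omega))
    unfold TrigonB Trigon
    rw [hT]
    refine ⟨⟨?_, ?_, ?_, ?_, ?_⟩, ?_⟩
    · unfold trigonSet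
      rw [pa, pb, pc]
      exact card_six (ncM (by omega) (by omega) (by omega)) (ncM (by omega) (by omega) (by omega)) (ncM (by omega) (by omega) (by omega)) (ncM (by omega) (by omega) (by omega)) (ncM (by omega) (by omega) (by omega))
        (ncM (by omega) (by omega) (by omega)) (ncM (by omega) (by omega) (by omega)) (ncM (by omega) (by omega) (by omega)) (ncM (by omega) (by omega) (by omega)) (ncM (by omega) (by omega) (by omega))
        (ncM (by omega) (by omega) (by omega)) (ncM (by omega) (by omega) (by omega)) (ncM (by omega) (by omega) (by omega)) (ncM (by omega) (by omega) (by omega)) (ncM (by omega) (by omega) (by omega))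
    · intro x hx
      unfold trigonSet at hx ⊢
      rw [pa, pb, pc] at hx ⊢
      simp only [Finset.mem_insert, Finset.mem_singleton] at hx
      rcases hx with rfl | rfl | rfl | rfl | rfl | rfl
      · rw [eB1]; simp only [Finset.mem_insert, Finset.mem_singleton]; exact Or.inr (Or.inr (Or.inr (Or.inl trivial)))
      · rw [eB2]; simp only [Finset.mem_insert, Finset.mem_singleton]; exact Or.inr (Or.inr (Or.inr (Or.inr (Or.inr trivial))))
      · rw [eA1]; simp only [Finset.mem_insert, Finset.mem_singleton]; exact Or.inr (Or.inr (Or.inr (Or.inr (Or.inl trivial))))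
      · rw [eA2]; simp only [Finset.mem_insert, Finset.mem_singleton]; exact Or.inl trivial
      · rw [eC1]; simp only [Finset.mem_insert, Finset.mem_singleton]; exact Or.inr (Or.inr (Or.inl trivial))
      · rw [eC2]; simp only [Finset.mem_insert, Finset.mem_singleton]; exact Or.inr (Or.inl trivial)
    · rw [pb, eB1]; exact (ncM (by omega) (by omega) (by omega))
    · rw [pa, eA1]; exact (ncM (by omega) (by omega) (by omega))
    · rw [pc, eC1]; exact (ncM (by omega) (by omega) (by omega))
    · rw [pb]
      unfold ExactlyOne
      refine Or.inr (Or.inr ⟨?_, ?_, ?_⟩)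
      · intro hc
        unfold Crosses at hc
        rw [eB1, eB2] at hc
        obtain ⟨-, -, -, -, hx⟩ := hc
        rw [inArc_cast (by omega) (by omega) (by omega), inArc_cast (by omega) (by omega) (by omega)] at hx
        unfold Xor' Xor at hx
        split_ifs at hx <;> omega
      · intro hc
        unfold Crosses at hc
        rw [eB1, eA1] at hc
        obtain ⟨-, -, -, -, hx⟩ := hc
        rw [inArc_cast (by omega) (by omega) (by omega), inArc_cast (by omega) (by omega) (by omega)] at hx
        unfold Xor' Xor at hx
        split_ifs at hx <;> omega
      · unfold Crosses
        rw [eB2, eA1]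
        refine ⟨(ncM (by omega) (by omega) (by omega)), (ncM (by omega) (by omega) (by omega)), (ncM (by omega) (by omega) (by omega)), (ncM (by omega) (by omega) (by omega)), ?_⟩
        rw [inArc_cast (by omega) (by omega) (by omega), inArc_cast (by omega) (by omega) (by omega)]
        unfold Xor' Xor
        split_ifs <;> omega

end Construction

/-- If a chord diagram is not reducible and contains a trigon of type D, then there
exists a chord `p` such that the I-move at `p` produces a chord diagram containing a
trigon of type A or of type B (step in the proof of Lemma 2.6). -/
theorem trigonD_not_reducible_imove_trigonA_or_trigonB {n : ℕ} (hn : 1 ≤ n)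
    (f : ZMod (2 * n) → ZMod (2 * n)) (hinv : Function.Involutive f)
    (hfree : ∀ a, f a ≠ a) (hnr : ¬ Reducible f)
    (i j k : ZMod (2 * n)) (ht : TrigonD f i j k) :
    ∃ p : ZMod (2 * n), ∃ i' j' k' : ZMod (2 * (n - 1)),
      TrigonA (IMove f p) i' j' k' ∨ TrigonB (IMove f p) i' j' k' := by
  haveI : NeZero (2 * n) := ⟨by omega⟩
  set F := conj (-i) f with hF
  have hD : TrigonD F 0 (j + -i) (k + -i) := by
    have h := trigonD_conj (-i) f i j k ht
    rwa [add_neg_cancel] at h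
  have hinv' : Function.Involutive F := conj_involutive hinv
  have hfree' : ∀ a, F a ≠ a := conj_free hfree
  have hnr' : ¬ Reducible F := not_reducible_conj (-i) f hnr
  set J := (j + -i).val with hJdef
  set K := (k + -i).val with hKdef
  have hj : j + -i = ((J : ℕ) : ZMod (2 * n)) := (cast_val_self _).symm
  have hk : k + -i = ((K : ℕ) : ZMod (2 * n)) := (cast_val_self _).symm
  rw [hj, hk] at hD
  have hJlt : J < 2 * n := ZMod.val_lt _
  have hKlt : K < 2 * n := ZMod.val_lt _
  have hcard := hD.1.1
  unfold trigonSet at hcard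
  obtain ⟨w1, w2, w3, w4, w5⟩ := six_notmem hcard
  have e1 : ((J : ℕ) : ZMod (2 * n)) + 1 = ((J + 1 : ℕ) : ZMod (2 * n)) := cast_add_one rfl
  have e2 : ((K : ℕ) : ZMod (2 * n)) + 1 = ((K + 1 : ℕ) : ZMod (2 * n)) := cast_add_one rfl
  simp only [Finset.mem_insert, Finset.mem_singleton, not_or, zero_add, e1, e2] at w1 w2 w3 w4 w5
  have hJ0 : J ≠ 0 := fun h => w1.2.1 (by rw [h, Nat.cast_zero])
  have hJ1 : J ≠ 1 := fun h => w2.1 (by rw [h, Nat.cast_one])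
  have hK0 : K ≠ 0 := fun h => w1.2.2.2.1 (by rw [h, Nat.cast_zero])
  have hK1 : K ≠ 1 := fun h => w2.2.2.1 (by rw [h, Nat.cast_one])
  have hJN : J + 1 ≠ 2 * n := fun h => w1.2.2.1 (by rw [h]; exact (ZMod.natCast_self _).symm)
  have hKN : K + 1 ≠ 2 * n := fun h => w1.2.2.2.2 (by rw [h]; exact (ZMod.natCast_self _).symm)
  have hJK : J + 2 ≤ K ∨ K + 2 ≤ J := by
    have d1 : J ≠ K := fun h => w3.2.1 (by rw [h])
    have d2 : J ≠ K + 1 := fun h => w3.2.2 (by rw [h])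
    have d3 : J + 1 ≠ K := fun h => w4.1 (by rw [h])
    omega
  obtain ⟨P, Q, hP2, hPQ, hQN, hf1, hfP, hfP1, hfQ, hfQ1, hf0⟩ :=
    classify F hinv' hfree' (by omega) (by omega) (by omega) (by omega) hJK hD
  have htrans : ∀ p : ZMod (2 * n), IMove F p = IMove f (p + i) := by
    intro p
    have h := imove_conj (-i) f (p + i)
    rw [show p + i + -i = p from by ring] at h
    rw [hF]
    exact h
  have key : ∀ x : ZMod (2 * n), x ≠ 1 → x ≠ ((P : ℕ) : ZMod (2 * n)) →
      F x ≠ 1 → F x ≠ ((P : ℕ) : ZMod (2 * n)) →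
      InArc 1 ((P : ℕ) : ZMod (2 * n)) x → ¬ InArc 1 ((P : ℕ) : ZMod (2 * n)) (F x) →
      ∃ p : ZMod (2 * n), ∃ i' j' k' : ZMod (2 * (n - 1)),
        TrigonA (IMove F p) i' j' k' ∨ TrigonB (IMove F p) i' j' k' := by
    intro x hx1 hxP hy1 hyP hin hnin
    have hXlt : x.val < 2 * n := ZMod.val_lt x
    have hYlt : (F x).val < 2 * n := ZMod.val_lt _
    have hXne1 : x.val ≠ 1 := fun h => hx1 (by rw [← cast_val_self x, h, Nat.cast_one])
    have hin' : InArc ((1 : ℕ) : ZMod (2 * n)) ((P : ℕ) : ZMod (2 * n)) ((x.val : ℕ) : ZMod (2 * n)) := by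
      rw [Nat.cast_one, cast_val_self]
      exact hin
    have hXf : 2 ≤ x.val ∧ x.val < P := by
      rw [inArc_cast (by omega) (by omega) (by omega)] at hin'
      split_ifs at hin' <;> omega
    have hy0 : F x ≠ 0 := by
      intro h
      have hx' : x = ((Q + 1 : ℕ) : ZMod (2 * n)) := by rw [← hinv' x, h, hf0]
      have : x.val = Q + 1 := by rw [hx', ZMod.val_cast_of_lt (by omega)]
      omega
    have hyP1 : F x ≠ ((P + 1 : ℕ) : ZMod (2 * n)) := by
      intro h
      have hx' : x = ((Q : ℕ) : ZMod (2 * n)) := by rw [← hinv' x, h, hfP1]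
      have : x.val = Q := by rw [hx', ZMod.val_cast_of_lt (by omega)]
      omega
    have hyQ : F x ≠ ((Q : ℕ) : ZMod (2 * n)) := by
      intro h
      have hx' : x = ((P + 1 : ℕ) : ZMod (2 * n)) := by rw [← hinv' x, h, hfQ]
      have : x.val = P + 1 := by rw [hx', ZMod.val_cast_of_lt (by omega)]
      omega
    have hyQ1 : F x ≠ ((Q + 1 : ℕ) : ZMod (2 * n)) := by
      intro h
      have hx' : x = (0 : ZMod (2 * n)) := by rw [← hinv' x, h, hfQ1]
      have : x.val = 0 := by rw [hx', ZMod.val_zero]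
      omega
    have hYne0 : (F x).val ≠ 0 := fun h => hy0 (by rw [← cast_val_self (F x), h, Nat.cast_zero])
    have hYne1 : (F x).val ≠ 1 := fun h => hy1 (by rw [← cast_val_self (F x), h, Nat.cast_one])
    have hYneP : (F x).val ≠ P := fun h => hyP (by rw [← cast_val_self (F x), h])
    have hYneP1 : (F x).val ≠ P + 1 := fun h => hyP1 (by rw [← cast_val_self (F x), h])
    have hYneQ : (F x).val ≠ Q := fun h => hyQ (by rw [← cast_val_self (F x), h])
    have hYneQ1 : (F x).val ≠ Q + 1 := fun h => hyQ1 (by rw [← cast_val_self (F x), h])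
    have hnin' : ¬ InArc ((1 : ℕ) : ZMod (2 * n)) ((P : ℕ) : ZMod (2 * n)) (((F x).val : ℕ) : ZMod (2 * n)) := by
      rw [Nat.cast_one, cast_val_self]
      exact hnin
    have hYf : P + 2 ≤ (F x).val := by
      rw [inArc_cast (by omega) (by omega) (by omega)] at hnin'
      split_ifs at hnin' <;> omega
    have hfx' : F ((x.val : ℕ) : ZMod (2 * n)) = (((F x).val : ℕ) : ZMod (2 * n)) := by
      rw [cast_val_self, cast_val_self]
    obtain ⟨i', j', k', hr⟩ := construction F (by omega) (by omega) hPQ hQN (by omega)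
      (by omega) hYneQ hYneQ1 hf1 hfP hfP1 hfQ hfQ1 hf0 hfx'
    exact ⟨((x.val : ℕ) : ZMod (2 * n)), i', j', k', hr⟩
  have hres : ∃ p : ZMod (2 * n), ∃ i' j' k' : ZMod (2 * (n - 1)),
      TrigonA (IMove F p) i' j' k' ∨ TrigonB (IMove F p) i' j' k' := by
    unfold Reducible at hnr'
    push_neg at hnr'
    obtain ⟨c₀, hc⟩ := hnr' 1
    unfold Crosses at hc
    rw [hf1] at hc
    obtain ⟨hcne1, hcne2, hcne3, hcne4, hxor⟩ := hc
    rcases hxor with ⟨hin, hnin⟩ | ⟨hin, hnin⟩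
    · exact key c₀ hcne1 hcne2 hcne3 hcne4 hin hnin
    · refine key (F c₀) hcne3 hcne4 ?_ ?_ hin ?_
      · rw [hinv' c₀]; exact hcne1
      · rw [hinv' c₀]; exact hcne2
      · rw [hinv' c₀]; exact hnin
  obtain ⟨p, i', j', k', hr⟩ := hres
  refine ⟨p + i, i', j', k', ?_⟩
  rwa [← htrans p]

end SphericalCurveReductivity
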